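/- Let δ be an integer and μ a partition. There is at most one partition λ with (μ,λ) a δ-pair. Explicitly: if λ and ν are both obtained from μ by adding a horizontal strip to a single row so that the last added node has content δ - |μ|, then λ = ν. -/
import Mathlib


/-- A partition: a weakly decreasing, finitely supported sequence of non-negative integers.
`parts i` is the `(i+1)`-st part `λ_{i+1}` (rows are 0-indexed in Lean). -/
structure Partn where
  parts : ℕ → ℕ
  antitone : Antitone parts
  finite_support : (Function.support parts).Finite

/-- The size `|λ|` of a partition. -/
noncomputable def Partn.size (l : Partn) : ℕ := ∑ᶠ i, l.parts i

/-- `(μ, λ)` is a `δ`-pair via (0-indexed) row `i`: `λ` is obtained from `μ` by adding nodes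
in row `i+1` only, and the last node of that row, the node `(i+1, λ_{i+1})`, has content
`λ_{i+1} - (i+1) = δ - |μ|`. -/
def IsDeltaPairRow (δ : ℤ) (μ l : Partn) (i : ℕ) : Prop :=
  (∀ j, j ≠ i → l.parts j = μ.parts j) ∧ μ.parts i < l.parts i ∧
    (l.parts i : ℤ) - (i + 1) = δ - (μ.size : ℤ)

/-- `(μ, λ)` is a `δ`-pair, written `μ ↪_δ λ`. -/
def IsDeltaPair (δ : ℤ) (μ l : Partn) : Prop := ∃ i, IsDeltaPairRow δ μ l i

/-- For a fixed `δ` and partition `μ`, there is at most one partition `λ`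
such that `(μ,λ)` is a `δ`-pair. -/
theorem deltaPair_unique (δ : ℤ) (μ l ν : Partn)
    (hl : IsDeltaPair δ μ l) (hν : IsDeltaPair δ μ ν) : l = ν := by
  obtain ⟨i, h1, h2, h3⟩ := hl
  obtain ⟨j, g1, g2, g3⟩ := hν
  have key : (l.parts i : ℤ) - (i+1) = (ν.parts j : ℤ) - (j+1) := by rw [h3, g3]
  have hij : i = j := by
    by_contra hne
    rcases lt_or_gt_of_ne hne with h | h
    · have a1 : ν.parts j ≤ ν.parts i := ν.antitone h.le
      have a2 : ν.parts i = μ.parts i := g1 i hne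
      omega
    · have a1 : l.parts i ≤ l.parts j := l.antitone h.le
      have a2 : l.parts j = μ.parts j := h1 j (Ne.symm hne)
      omega
  subst hij
  have hp : l.parts = ν.parts := by
    funext k
    by_cases hk : k = i
    · subst hk; omega
    · rw [h1 k hk, g1 k hk]
  obtain ⟨lp, la, lf⟩ := l
  obtain ⟨np, na, nf⟩ := ν
  simp only at hp
  subst hp
  rfl
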